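/- Let k be a field whose characteristic is a prime p. Then the first Weyl algebra A₁(k) is a domain (it has no zero divisors) and it is a free module of rank p² over its center; in particular, the localization of A₁(k) at the nonzero elements of its center Z is a K-vector space of dimension p², where K is the fraction field of Z. -/

import Mathlib

section Weyl

variable {k : Type*} [Field k] {A : Type*} [Ring A] [Algebra k A] {x d : A}

theorem weyl_dx (hxd : d * x - x * d = 1) : d * x = x * d + 1 := by
  rw [← hxd]; noncomm_ring

theorem weyl_d_mul_xpow (hxd : d * x - x * d = 1) (n : ℕ) :
    d * x ^ n = x ^ n * d + (n : A) * x ^ (n - 1) := by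
  induction n with
  | zero => simp
  | succ m ih =>
    rw [pow_succ, ← mul_assoc, ih]
    rcases Nat.eq_zero_or_pos m with hm | hm
    · subst hm; simp [weyl_dx hxd]
    · have h1 : x ^ (m - 1) * x = x ^ m := by
        rw [← pow_succ]; congr 1; omega
      rw [add_mul, mul_assoc, weyl_dx hxd, mul_assoc, h1, Nat.add_sub_cancel,
        show ((m+1:ℕ) : A) = (m : A) + 1 by push_cast; ring]
      noncomm_ring
  
theorem weyl_dpow_mul_x (hxd : d * x - x * d = 1) (n : ℕ) :
    d ^ n * x = x * d ^ n + (n : A) * d ^ (n - 1) := by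
  induction n with
  | zero => simp
  | succ m ih =>
    rw [pow_succ, mul_assoc, weyl_dx hxd]
    rcases Nat.eq_zero_or_pos m with hm | hm
    · subst hm; simp
    · have h1 : (m : A) * d ^ (m-1) * d = (m : A) * d ^ m := by
        rw [mul_assoc, ← pow_succ]; congr 2; omega
      rw [mul_add, mul_one, ← mul_assoc, ih, add_mul, h1, Nat.add_sub_cancel,
        show ((m+1:ℕ) : A) = (m : A) + 1 by push_cast; ring]
      noncomm_ring

end Weyl

section Weyl2

variable {k : Type*} [Field k] {A : Type*} [Ring A] [Algebra k A] {x d : A}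
variable {p : ℕ} [CharP k p]
variable (B : Module.Basis (ℕ × ℕ) k A)

theorem weyl_charA (k : Type*) [Field k] [Algebra k A] [CharP k p] : ((p : ℕ) : A) = 0 := by
  have : ((p : ℕ) : A) = algebraMap k A ((p : ℕ) : k) := by
    rw [map_natCast]
  rw [this, CharP.cast_eq_zero k p, map_zero]

include B in
theorem weyl_mem_center (hB : ∀ ij : ℕ × ℕ, B ij = x ^ ij.1 * d ^ ij.2)
    {z : A} (hx : Commute x z) (hd : Commute d z) : z ∈ Subring.center A := by
  rw [Subring.mem_center_iff]
  intro a
  have : (LinearMap.mulRight k z) a = (LinearMap.mulLeft k z) a := by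
    refine LinearMap.congr_fun (B.ext fun ij => ?_) a
    simp only [LinearMap.mulRight_apply, LinearMap.mulLeft_apply, hB]
    exact (((hx.pow_left ij.1).mul_left (hd.pow_left ij.2))).eq
  simpa using this

theorem weyl_xp_central (hxd : d * x - x * d = 1) (hp : p ≠ 0)
    (hB : ∀ ij : ℕ × ℕ, B ij = x ^ ij.1 * d ^ ij.2) : x ^ p ∈ Subring.center A := by
  refine weyl_mem_center B hB (Commute.pow_right rfl p) ?_
  show d * x ^ p = x ^ p * d
  rw [weyl_d_mul_xpow hxd, weyl_charA k, zero_mul, add_zero]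

theorem weyl_dp_central (hxd : d * x - x * d = 1) (hp : p ≠ 0)
    (hB : ∀ ij : ℕ × ℕ, B ij = x ^ ij.1 * d ^ ij.2) : d ^ p ∈ Subring.center A := by
  refine weyl_mem_center B hB ?_ (Commute.pow_right rfl p)
  show x * d ^ p = d ^ p * x
  rw [weyl_dpow_mul_x hxd, weyl_charA k, zero_mul, add_zero]

end Weyl2

section Weyl3

variable {k : Type*} [Field k] {A : Type*} [Ring A] [Algebra k A] {x d : A}
variable (B : Module.Basis (ℕ × ℕ) k A)

theorem weyl_natCast_smul (n : ℕ) (a : A) : (n : A) * a = (n : k) • a := by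
  rw [Algebra.smul_def, map_natCast]

include B in
theorem weyl_adD_repr (hxd : d * x - x * d = 1)
    (hB : ∀ ij : ℕ × ℕ, B ij = x ^ ij.1 * d ^ ij.2) (z : A) (a b : ℕ) :
    B.repr (d * z - z * d) (a, b) = ((a + 1 : ℕ) : k) * B.repr z (a + 1, b) := by
  have key : (Finsupp.lapply (a,b) ∘ₗ (B.repr : A →ₗ[k] (ℕ × ℕ →₀ k)) ∘ₗ
      (LinearMap.mulLeft k d - LinearMap.mulRight k d))
      = ((a + 1 : ℕ) : k) • (Finsupp.lapply (a+1,b) ∘ₗ (B.repr : A →ₗ[k] (ℕ × ℕ →₀ k))) := by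
    refine B.ext fun ij => ?_
    obtain ⟨i, j⟩ := ij
    have e1 : d * d ^ j = d ^ j * d := ((Commute.refl d).pow_right j).eq
    have hcomp : d * B (i, j) - B (i, j) * d = ((i:ℕ) : k) • B (i-1, j) := by
      rw [hB, hB]
      show d * (x ^ i * d ^ j) - x ^ i * d ^ j * d = ((i:ℕ) : k) • (x ^ (i-1) * d ^ j)
      rw [← weyl_natCast_smul, ← mul_assoc, weyl_d_mul_xpow hxd, add_mul,
        mul_assoc (x ^ i) d (d ^ j), e1, ← mul_assoc]
      simp only [mul_assoc]
      abel
    simp only [LinearMap.comp_apply, LinearMap.sub_apply, LinearMap.smul_apply,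
      LinearMap.mulLeft_apply, LinearMap.mulRight_apply]
    rw [hcomp, map_smul]
    simp only [LinearEquiv.coe_coe, Finsupp.lapply_apply, Finsupp.smul_apply,
      Module.Basis.repr_self_apply, smul_eq_mul]
    by_cases h : (i, j) = ((a+1 : ℕ), b)
    · rw [if_pos (show ((i-1:ℕ), j) = (a, b) by rw [Prod.ext_iff] at h ⊢; simp at h ⊢; omega),
        if_pos h]
      rw [Prod.ext_iff] at h; simp at h
      simp [h.1]
    · rw [if_neg h, mul_zero]
      by_cases h2 : ((i-1 : ℕ), j) = (a, b)
      · have hi : i = 0 := by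
          rcases Nat.eq_zero_or_pos i with h0 | h0
          · exact h0
          · exfalso; apply h
            rw [Prod.ext_iff] at h2 ⊢; simp at h2 ⊢; omega
        subst hi
        simp
      · rw [if_neg h2, mul_zero]
  have := LinearMap.congr_fun key z
  simpa using this

include B in
theorem weyl_adX_repr (hxd : d * x - x * d = 1)
    (hB : ∀ ij : ℕ × ℕ, B ij = x ^ ij.1 * d ^ ij.2) (z : A) (a b : ℕ) :
    B.repr (z * x - x * z) (a, b) = ((b + 1 : ℕ) : k) * B.repr z (a, b + 1) := by
  have key : (Finsupp.lapply (a,b) ∘ₗ (B.repr : A →ₗ[k] (ℕ × ℕ →₀ k)) ∘ₗ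
      (LinearMap.mulRight k x - LinearMap.mulLeft k x))
      = ((b + 1 : ℕ) : k) • (Finsupp.lapply (a,b+1) ∘ₗ (B.repr : A →ₗ[k] (ℕ × ℕ →₀ k))) := by
    refine B.ext fun ij => ?_
    obtain ⟨i, j⟩ := ij
    have e1 : x * x ^ i = x ^ i * x := ((Commute.refl x).pow_right i).eq
    have hcomp : B (i, j) * x - x * B (i, j) = ((j:ℕ) : k) • B (i, j-1) := by
      rw [hB, hB]
      show x ^ i * d ^ j * x - x * (x ^ i * d ^ j) = ((j:ℕ) : k) • (x ^ i * d ^ (j-1))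
      rw [← weyl_natCast_smul, mul_assoc, weyl_dpow_mul_x hxd, ← mul_assoc, e1, ← mul_assoc]
      simp only [mul_assoc]
      rw [mul_add, add_sub_cancel_left, ← mul_assoc, ← (Nat.cast_commute (j:ℕ) (x ^ i)).eq,
        mul_assoc]
    simp only [LinearMap.comp_apply, LinearMap.sub_apply, LinearMap.smul_apply,
      LinearMap.mulLeft_apply, LinearMap.mulRight_apply]
    rw [hcomp, map_smul]
    simp only [LinearEquiv.coe_coe, Finsupp.lapply_apply, Finsupp.smul_apply,
      Module.Basis.repr_self_apply, smul_eq_mul]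
    by_cases h : (i, j) = (a, (b+1 : ℕ))
    · rw [if_pos (show (i, (j-1:ℕ)) = (a, b) by rw [Prod.ext_iff] at h ⊢; simp at h ⊢; omega),
        if_pos h]
      rw [Prod.ext_iff] at h; simp at h
      simp [h.2]
    · rw [if_neg h, mul_zero]
      by_cases h2 : (i, (j-1 : ℕ)) = (a, b)
      · have hj : j = 0 := by
          rcases Nat.eq_zero_or_pos j with h0 | h0
          · exact h0
          · exfalso; apply h
            rw [Prod.ext_iff] at h2 ⊢; simp at h2 ⊢; omega
        subst hj
        simp
      · rw [if_neg h2, mul_zero]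
  have := LinearMap.congr_fun key z
  simpa using this

include B in
theorem weyl_center_repr {p : ℕ} [CharP k p] (hxd : d * x - x * d = 1)
    (hB : ∀ ij : ℕ × ℕ, B ij = x ^ ij.1 * d ^ ij.2) {z : A} (hz : z ∈ Subring.center A)
    (i j : ℕ) (h : ¬(p ∣ i ∧ p ∣ j)) : B.repr z (i, j) = 0 := by
  rw [Subring.mem_center_iff] at hz
  rcases not_and_or.mp h with h1 | h1
  · -- ¬ p ∣ i, so i ≥ 1
    have hi : i ≠ 0 := by rintro rfl; exact h1 (dvd_zero p)
    obtain ⟨a, rfl⟩ : ∃ a, i = a + 1 := ⟨i - 1, by omega⟩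
    have h0 : d * z - z * d = 0 := by rw [hz d]; abel
    have := weyl_adD_repr B hxd hB z a j
    rw [h0, map_zero, Finsupp.coe_zero, Pi.zero_apply] at this
    have hc : ((a + 1 : ℕ) : k) ≠ 0 := by
      rw [Ne, CharP.cast_eq_zero_iff k p]; exact h1
    exact (mul_eq_zero.mp this.symm).resolve_left hc
  · have hj : j ≠ 0 := by rintro rfl; exact h1 (dvd_zero p)
    obtain ⟨b, rfl⟩ : ∃ b, j = b + 1 := ⟨j - 1, by omega⟩
    have h0 : z * x - x * z = 0 := by rw [← hz x]; abel
    have := weyl_adX_repr B hxd hB z i b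
    rw [h0, map_zero, Finsupp.coe_zero, Pi.zero_apply] at this
    have hc : ((b + 1 : ℕ) : k) ≠ 0 := by
      rw [Ne, CharP.cast_eq_zero_iff k p]; exact h1
    exact (mul_eq_zero.mp this.symm).resolve_left hc

include B in
theorem weyl_mem_span (a : A) {S : Submodule k A}
    (h : ∀ w ∈ (B.repr a).support, B w ∈ S) : a ∈ S := by
  rw [← B.linearCombination_repr a, Finsupp.linearCombination_apply, Finsupp.sum]
  exact S.sum_mem fun w hw => S.smul_mem _ (h w hw)

end Weyl3

section Weyl4

variable {k : Type*} [Field k] {A : Type*} [Ring A] [Algebra k A] {x d : A}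
variable (B : Module.Basis (ℕ × ℕ) k A)

/-- Elements all of whose basis coefficients in weight `≥ n` vanish, where the weight of
`(i,j)` is `N * i + j`. -/
def weylLow (N n : ℕ) : Submodule k A where
  carrier := {a | ∀ w : ℕ × ℕ, n ≤ N * w.1 + w.2 → B.repr a w = 0}
  add_mem' := fun ha hb w hw => by rw [map_add, Finsupp.add_apply, ha w hw, hb w hw, add_zero]
  zero_mem' := fun w _ => by rw [map_zero]; rfl
  smul_mem' := fun c a ha w hw => by
    rw [map_smul, Finsupp.smul_apply, ha w hw, smul_zero]

theorem weylLow_mono {N n m : ℕ} (h : n ≤ m) : weylLow B N n ≤ weylLow B N m :=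
  fun _ ha w hw => ha w (le_trans h hw)

theorem basis_mem_weylLow {N n : ℕ} {w : ℕ × ℕ} (h : N * w.1 + w.2 < n) :
    B w ∈ weylLow B N n := by
  intro w' hw'
  rw [Module.Basis.repr_self_apply, if_neg]
  rintro rfl
  omega

theorem weylLow_supp {N n : ℕ} {a : A} (ha : a ∈ weylLow B N n) {w : ℕ × ℕ}
    (hw : w ∈ (B.repr a).support) : N * w.1 + w.2 < n := by
  by_contra h
  exact (Finsupp.mem_support_iff.mp hw) (ha w (by omega))

theorem weyl_repr_sum (a : A) : a = (B.repr a).sum fun w c => c • B w := by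
  conv_lhs => rw [← B.linearCombination_repr a]
  rw [Finsupp.linearCombination_apply]

theorem weyl_xmul_low (hB : ∀ ij : ℕ × ℕ, B ij = x ^ ij.1 * d ^ ij.2)
    {N n : ℕ} {a : A} (ha : a ∈ weylLow B N n) : x * a ∈ weylLow B N (n + N) := by
  rw [weyl_repr_sum B a, Finsupp.sum, Finset.mul_sum]
  refine Submodule.sum_mem _ fun w hw => ?_
  rw [mul_smul_comm]
  refine Submodule.smul_mem _ _ ?_
  have : x * B w = B (w.1 + 1, w.2) := by
    rw [hB, hB, ← mul_assoc, ← pow_succ']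
  rw [this]
  refine basis_mem_weylLow B ?_
  have := weylLow_supp B ha hw
  simp only [Nat.mul_add, Nat.mul_one]
  omega

theorem weyl_muld_low (hB : ∀ ij : ℕ × ℕ, B ij = x ^ ij.1 * d ^ ij.2)
    {N n : ℕ} {a : A} (ha : a ∈ weylLow B N n) : a * d ∈ weylLow B N (n + 1) := by
  rw [weyl_repr_sum B a, Finsupp.sum, Finset.sum_mul]
  refine Submodule.sum_mem _ fun w hw => ?_
  rw [smul_mul_assoc]
  refine Submodule.smul_mem _ _ ?_
  have : B w * d = B (w.1, w.2 + 1) := by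
    rw [hB, hB, mul_assoc, ← pow_succ]
  rw [this]
  exact basis_mem_weylLow B (by have := weylLow_supp B ha hw; simp only; omega)

theorem weyl_d_mul_basis (hxd : d * x - x * d = 1)
    (hB : ∀ ij : ℕ × ℕ, B ij = x ^ ij.1 * d ^ ij.2) (i j : ℕ) :
    d * B (i, j) = B (i, j + 1) + ((i : ℕ) : k) • B (i - 1, j) := by
  rw [hB, hB, hB, ← weyl_natCast_smul, ← mul_assoc, weyl_d_mul_xpow hxd, add_mul]
  show x ^ i * d * d ^ j + _ = x ^ i * d ^ (j+1) + _
  rw [mul_assoc, ← pow_succ', mul_assoc]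

theorem weyl_dmul_low (hxd : d * x - x * d = 1)
    (hB : ∀ ij : ℕ × ℕ, B ij = x ^ ij.1 * d ^ ij.2)
    {N n : ℕ} {a : A} (ha : a ∈ weylLow B N n) : d * a ∈ weylLow B N (n + 1) := by
  rw [weyl_repr_sum B a, Finsupp.sum, Finset.mul_sum]
  refine Submodule.sum_mem _ fun w hw => ?_
  rw [mul_smul_comm]
  refine Submodule.smul_mem _ _ ?_
  have hsupp := weylLow_supp B ha hw
  rw [show w = (w.1, w.2) from rfl, weyl_d_mul_basis B hxd hB]
  have h2 : N * (w.1 - 1) ≤ N * w.1 := Nat.mul_le_mul_left _ (Nat.sub_le _ _)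
  refine Submodule.add_mem _ (basis_mem_weylLow B (by simp only; omega)) ?_
  exact Submodule.smul_mem _ _ (basis_mem_weylLow B (by simp only; omega))

theorem weyl_xpowmul_low (hB : ∀ ij : ℕ × ℕ, B ij = x ^ ij.1 * d ^ ij.2)
    {N n : ℕ} {a : A} (ha : a ∈ weylLow B N n) (i : ℕ) :
    x ^ i * a ∈ weylLow B N (n + N * i) := by
  induction i with
  | zero => simpa using ha
  | succ m ih =>
    have := weyl_xmul_low B hB ih
    rw [← mul_assoc, ← pow_succ'] at this
    refine weylLow_mono B (by ring_nf; omega) this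

theorem weyl_muldpow_low (hB : ∀ ij : ℕ × ℕ, B ij = x ^ ij.1 * d ^ ij.2)
    {N n : ℕ} {a : A} (ha : a ∈ weylLow B N n) (b : ℕ) :
    a * d ^ b ∈ weylLow B N (n + b) := by
  induction b with
  | zero => simpa using ha
  | succ m ih =>
    have := weyl_muld_low B hB ih
    rw [mul_assoc, ← pow_succ] at this
    exact weylLow_mono B (by omega) this

theorem weyl_dpow_xpow (hxd : d * x - x * d = 1)
    (hB : ∀ ij : ℕ × ℕ, B ij = x ^ ij.1 * d ^ ij.2) (N j a : ℕ) :
    d ^ j * x ^ a - x ^ a * d ^ j ∈ weylLow B N (N * a + j) := by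
  induction j with
  | zero => simp
  | succ m ih =>
    have key : d ^ (m+1) * x ^ a - x ^ a * d ^ (m+1)
        = d * (d ^ m * x ^ a - x ^ a * d ^ m) + ((a : ℕ) : k) • (x ^ (a-1) * d ^ m) := by
      rw [← weyl_natCast_smul, mul_sub, ← mul_assoc, ← pow_succ', ← mul_assoc,
        weyl_d_mul_xpow hxd, add_mul, mul_assoc, ← pow_succ']
      noncomm_ring
    rw [key]
    refine Submodule.add_mem _ (weylLow_mono B (by omega) (weyl_dmul_low B hxd hB ih)) ?_
    refine Submodule.smul_mem _ _ ?_
    rw [← hB (a-1, m)]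
    refine basis_mem_weylLow B ?_
    have h2 : N * (a - 1) ≤ N * a := Nat.mul_le_mul_left _ (Nat.sub_le _ _)
    simp only
    omega

theorem weyl_basis_mul (hxd : d * x - x * d = 1)
    (hB : ∀ ij : ℕ × ℕ, B ij = x ^ ij.1 * d ^ ij.2) (N : ℕ) (w w' : ℕ × ℕ) :
    B w * B w' - B (w + w') ∈ weylLow B N (N * (w.1 + w'.1) + (w.2 + w'.2)) := by
  obtain ⟨i, j⟩ := w
  obtain ⟨a, b⟩ := w'
  have key : B (i,j) * B (a,b) - B ((i,j) + (a,b))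
      = x ^ i * ((d ^ j * x ^ a - x ^ a * d ^ j) * d ^ b) := by
    rw [hB, hB, hB]
    show x ^ i * d ^ j * (x ^ a * d ^ b) - x ^ (i+a) * d ^ (j+b) = _
    rw [pow_add, pow_add]
    noncomm_ring
  rw [key]
  have h1 := weyl_muldpow_low B hB (weyl_dpow_xpow B hxd hB N j a) b
  have h2 := weyl_xpowmul_low B hB h1 i
  refine weylLow_mono B (by simp only [Nat.mul_add]; omega) h2

include B in
theorem weyl_mul_ne_zero (hxd : d * x - x * d = 1)
    (hB : ∀ ij : ℕ × ℕ, B ij = x ^ ij.1 * d ^ ij.2) {a b : A} (ha : a ≠ 0) (hb : b ≠ 0) :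
    a * b ≠ 0 := by
  classical
  set sa := (B.repr a).support with hsa
  set sb := (B.repr b).support with hsb
  have hsa' : sa.Nonempty := by
    rw [hsa, Finsupp.support_nonempty_iff]
    simpa using ha
  have hsb' : sb.Nonempty := by
    rw [hsb, Finsupp.support_nonempty_iff]
    simpa using hb
  set N : ℕ := sa.sup Prod.snd + sb.sup Prod.snd + 1 with hN
  set wt : ℕ × ℕ → ℕ := fun w => N * w.1 + w.2 with hwt
  have hlt : ∀ w ∈ sa ∪ sb, w.2 < N := by
    intro w hw
    rcases Finset.mem_union.mp hw with h | h
    · have := Finset.le_sup (f := Prod.snd) h; omega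
    · have := Finset.le_sup (f := Prod.snd) h; omega
  have hNpos : 0 < N := by omega
  have winj : ∀ w ∈ sa ∪ sb, ∀ w' ∈ sa ∪ sb, wt w = wt w' → w = w' := by
    intro w hw w' hw' he
    have h1 : w.1 = w'.1 := by
      have he' : N * w.1 + w.2 = N * w'.1 + w'.2 := he
      have e1 : (N * w.1 + w.2) / N = w.1 := by
        rw [Nat.mul_add_div hNpos, Nat.div_eq_of_lt (hlt w hw)]; omega
      have e2 : (N * w'.1 + w'.2) / N = w'.1 := by
        rw [Nat.mul_add_div hNpos, Nat.div_eq_of_lt (hlt w' hw')]; omega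
      rw [← e1, ← e2, he']
    have h2 : w.2 = w'.2 := by
      simp only [hwt] at he
      rw [h1] at he
      omega
    exact Prod.ext h1 h2
  obtain ⟨va, hva, hmaxa⟩ := Finset.exists_max_image sa wt hsa'
  obtain ⟨vb, hvb, hmaxb⟩ := Finset.exists_max_image sb wt hsb'
  have key : B.repr (a * b) (va + vb) = B.repr a va * B.repr b vb := by
    have expand : B.repr (a * b) = ∑ w ∈ sa, ∑ w' ∈ sb,
        (B.repr a w * B.repr b w') • B.repr (B w * B w') := by
      conv_lhs => rw [weyl_repr_sum B a, weyl_repr_sum B b]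
      rw [Finsupp.sum, Finsupp.sum, Finset.sum_mul, map_sum]
      refine Finset.sum_congr rfl fun w hw => ?_
      rw [Finset.mul_sum, map_sum]
      refine Finset.sum_congr rfl fun w' hw' => ?_
      rw [smul_mul_assoc, mul_smul_comm, map_smul, map_smul, smul_smul]
    have hrepr_mono : ∀ w ∈ sa, ∀ w' ∈ sb,
        B.repr (B w * B w') (va + vb) = if w + w' = va + vb then 1 else 0 := by
      intro w hw w' hw'
      have hE := weyl_basis_mul B hxd hB N w w'
      have hwle : wt w ≤ wt va := hmaxa w hw
      have hwle' : wt w' ≤ wt vb := hmaxb w' hw'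
      have hwei : N * (w.1 + w'.1) + (w.2 + w'.2) ≤ N * (va + vb).1 + (va + vb).2 := by
        simp only [hwt, Prod.fst_add, Prod.snd_add, Nat.mul_add] at *
        omega
      have h0 := hE (va + vb) hwei
      rw [map_sub, Finsupp.sub_apply, sub_eq_zero] at h0
      rw [h0, Module.Basis.repr_self_apply]
    rw [expand]
    rw [Finsupp.finset_sum_apply]
    rw [Finset.sum_eq_single va]
    · rw [Finsupp.finset_sum_apply, Finset.sum_eq_single vb]
      · rw [Finsupp.smul_apply, hrepr_mono va hva vb hvb, if_pos rfl, smul_eq_mul, mul_one]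
      · intro w' hw' hne
        rw [Finsupp.smul_apply, hrepr_mono va hva w' hw', if_neg, smul_zero]
        intro hcon
        exact hne (by simpa using (add_right_injective va hcon))
      · intro hcon; exact absurd hvb hcon
    · intro w hw hne
      rw [Finsupp.finset_sum_apply]
      refine Finset.sum_eq_zero fun w' hw' => ?_
      rw [Finsupp.smul_apply, hrepr_mono w hw w' hw', if_neg, smul_zero]
      intro hcon
      have hwlt : wt w < wt va := by
        rcases lt_or_eq_of_le (hmaxa w hw) with h | h
        · exact h
        · exact absurd (winj w (Finset.mem_union_left _ hw) va
            (Finset.mem_union_left _ hva) h) hne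
      have : wt (w + w') = wt (va + vb) := by rw [hcon]
      simp only [hwt, Prod.fst_add, Prod.snd_add, Nat.mul_add] at this
      have hwle' : wt w' ≤ wt vb := hmaxb w' hw'
      simp only [hwt] at hwle' hwlt
      omega
    · intro hcon; exact absurd hva hcon
  intro hab
  have h1 : B.repr a va ≠ 0 := Finsupp.mem_support_iff.mp hva
  have h2 : B.repr b vb ≠ 0 := Finsupp.mem_support_iff.mp hvb
  rw [hab, map_zero] at key
  exact (mul_ne_zero h1 h2) (by simpa using key.symm)

end Weyl4

section Weyl5

variable {k : Type*} [Field k] {A : Type*} [Ring A] [Algebra k A] {x d : A}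
variable {p : ℕ} [CharP k p]
variable (B : Module.Basis (ℕ × ℕ) k A)

theorem weyl_smul_center (z : Subring.center A) (m : A) : z • m = (z : A) * m := rfl

include B in
theorem weyl_basis_mul_exact (hdp : d ^ p ∈ Subring.center A)
    (hB : ∀ ij : ℕ × ℕ, B ij = x ^ ij.1 * d ^ ij.2) {w : ℕ × ℕ} (hw : p ∣ w.2) (r s : ℕ) :
    B w * (x ^ r * d ^ s) = B (w.1 + r, w.2 + s) := by
  have hc : Commute (d ^ w.2) (x ^ r) := by
    obtain ⟨c, hcq⟩ := hw
    have h1 : ∀ g, g * d ^ p = d ^ p * g := Subring.mem_center_iff.mp hdp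
    have h2 : Commute (d ^ p) x := (h1 x).symm
    rw [hcq, pow_mul]
    exact (h2.pow_left c).pow_right r
  rw [hB, hB]
  show x ^ w.1 * d ^ w.2 * (x ^ r * d ^ s) = x ^ (w.1 + r) * d ^ (w.2 + s)
  rw [pow_add, pow_add, mul_assoc (x ^ w.1) (d ^ w.2), ← mul_assoc (d ^ w.2), hc.eq]
  noncomm_ring

include B in
theorem weyl_central_mul_repr (hxd : d * x - x * d = 1)
    (hB : ∀ ij : ℕ × ℕ, B ij = x ^ ij.1 * d ^ ij.2) (hdp : d ^ p ∈ Subring.center A)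
    {z : A} (hz : z ∈ Subring.center A)
    (r s a₀ b₀ u v : ℕ) (hr : r < p) (hs : s < p) (ha₀ : a₀ < p) (hb₀ : b₀ < p)
    (hu : p ∣ u) (hv : p ∣ v) :
    B.repr (z * (x ^ r * d ^ s)) (u + a₀, v + b₀)
      = if r = a₀ ∧ s = b₀ then B.repr z (u, v) else 0 := by
  classical
  have hsupp : ∀ w ∈ (B.repr z).support, p ∣ w.1 ∧ p ∣ w.2 := by
    intro w hw
    by_contra hcon
    exact Finsupp.mem_support_iff.mp hw
      (by rw [show w = (w.1, w.2) from rfl] at *; exact weyl_center_repr B hxd hB hz _ _ hcon)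
  conv_lhs => rw [weyl_repr_sum B z]
  rw [Finsupp.sum, Finset.sum_mul, map_sum, Finsupp.finset_sum_apply]
  have hterm : ∀ w ∈ (B.repr z).support,
      B.repr ((B.repr z w • B w) * (x ^ r * d ^ s)) (u + a₀, v + b₀)
        = B.repr z w * (if (w.1 + r, w.2 + s) = ((u + a₀ : ℕ), (v + b₀ : ℕ)) then 1 else 0) := by
    intro w hw
    rw [smul_mul_assoc, weyl_basis_mul_exact B hdp hB (hsupp w hw).2, map_smul,
      Finsupp.smul_apply, Module.Basis.repr_self_apply, smul_eq_mul]
  rw [Finset.sum_congr rfl hterm]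
  by_cases h : r = a₀ ∧ s = b₀
  · obtain ⟨h1, h2⟩ := h
    subst h1; subst h2
    rw [if_pos ⟨rfl, rfl⟩]
    rw [Finset.sum_eq_single (u, v)]
    · rw [if_pos (by simp), mul_one]
    · intro w hw hne
      rw [if_neg, mul_zero]
      intro hcon
      rw [Prod.ext_iff] at hcon
      simp only at hcon
      exact hne (Prod.ext (by omega) (by omega))
    · intro hcon
      rw [Finsupp.notMem_support_iff.mp hcon, zero_mul]
  · rw [if_neg h]
    refine Finset.sum_eq_zero fun w hw => ?_
    rw [if_neg, mul_zero]
    intro hcon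
    rw [Prod.ext_iff] at hcon
    simp only at hcon
    obtain ⟨hw1, hw2⟩ := hsupp w hw
    obtain ⟨c1, hc1⟩ := hw1
    obtain ⟨c2, hc2⟩ := hw2
    obtain ⟨c3, hc3⟩ := hu
    obtain ⟨c4, hc4⟩ := hv
    apply h
    constructor
    · have e1 : (w.1 + r) % p = r := by rw [hc1, Nat.mul_add_mod, Nat.mod_eq_of_lt hr]
      have e2 : (u + a₀) % p = a₀ := by rw [hc3, Nat.mul_add_mod, Nat.mod_eq_of_lt ha₀]
      rw [← e1, hcon.1, e2]
    · have e1 : (w.2 + s) % p = s := by rw [hc2, Nat.mul_add_mod, Nat.mod_eq_of_lt hs]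
      have e2 : (v + b₀) % p = b₀ := by rw [hc4, Nat.mul_add_mod, Nat.mod_eq_of_lt hb₀]
      rw [← e1, hcon.2, e2]

end Weyl5

set_option synthInstance.maxHeartbeats 1000000 in
/-- Let `k` be a field whose characteristic is a prime `p`, and let `A` be the first Weyl
algebra over `k` (generators `x`, `d` with `d * x - x * d = 1` and `k`-basis the monomials
`x ^ i * d ^ j`).  Then `A` is a domain and a free module of rank `p ^ 2` over its center
`Z`; in particular the localization `K ⊗[Z] A` of `A` at the nonzero central elements is a
vector space of dimension `p ^ 2` over the fraction field `K` of `Z`. -/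
theorem weyl_isDomain_and_free_rank_p_sq_over_center
    (k : Type*) [Field k] (p : ℕ) (hp : p.Prime) [CharP k p]
    (A : Type*) [Ring A] [Algebra k A] (x d : A)
    (hxd : d * x - x * d = 1)
    (B : Module.Basis (ℕ × ℕ) k A) (hB : ∀ ij : ℕ × ℕ, B ij = x ^ ij.1 * d ^ ij.2) :
    IsDomain A ∧
    Nonempty (Module.Basis (Fin (p ^ 2)) (Subring.center A) A) ∧
    Module.finrank (FractionRing (Subring.center A))
      (TensorProduct (Subring.center A) (FractionRing (Subring.center A)) A) = p ^ 2 := by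
  classical
  haveI : Nontrivial A := ⟨B (0,0), 0, B.ne_zero (0,0)⟩
  have hp0 : p ≠ 0 := hp.ne_zero
  have hpp : 0 < p := hp.pos
  haveI : NoZeroDivisors A := ⟨fun {a b} hab => by
    by_contra hcon
    push_neg at hcon
    exact weyl_mul_ne_zero B hxd hB hcon.1 hcon.2 hab⟩
  haveI hdom : IsDomain A := NoZeroDivisors.to_isDomain A
  have hxp : x ^ p ∈ Subring.center A := weyl_xp_central B hxd hp0 hB
  have hdp : d ^ p ∈ Subring.center A := weyl_dp_central B hxd hp0 hB
  set e : Fin p × Fin p → A := fun ab => x ^ (ab.1 : ℕ) * d ^ (ab.2 : ℕ) with he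
  -- spanning
  have hspan : ⊤ ≤ Submodule.span (Subring.center A) (Set.range e) := by
    intro a _
    have hmono : ∀ w : ℕ × ℕ, B w ∈ Submodule.span (Subring.center A) (Set.range e) := by
      intro w
      have hz : x ^ (p * (w.1 / p)) * d ^ (p * (w.2 / p)) ∈ Subring.center A := by
        refine Subring.mul_mem _ ?_ ?_
        · rw [pow_mul]; exact pow_mem hxp _
        · rw [pow_mul]; exact pow_mem hdp _
      have hbase : e (⟨w.1 % p, Nat.mod_lt _ hpp⟩, ⟨w.2 % p, Nat.mod_lt _ hpp⟩)
          ∈ Submodule.span (Subring.center A) (Set.range e) :=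
        Submodule.subset_span ⟨_, rfl⟩
      have hsm := Submodule.smul_mem _ (⟨_, hz⟩ : Subring.center A) hbase
      rw [weyl_smul_center] at hsm
      have hb1 : (x ^ (p * (w.1 / p)) * d ^ (p * (w.2 / p)))
          * (x ^ (w.1 % p) * d ^ (w.2 % p)) = B w := by
        rw [← hB (p * (w.1 / p), p * (w.2 / p)),
          weyl_basis_mul_exact B hdp hB (w := (p * (w.1 / p), p * (w.2 / p)))
            ⟨w.2 / p, rfl⟩ (w.1 % p) (w.2 % p)]
        congr 1
        exact Prod.ext (Nat.div_add_mod _ _) (Nat.div_add_mod _ _)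
      rw [show ((⟨_, hz⟩ : Subring.center A) : A) = x ^ (p * (w.1 / p)) * d ^ (p * (w.2 / p))
        from rfl] at hsm
      rw [show e (⟨w.1 % p, Nat.mod_lt _ hpp⟩, ⟨w.2 % p, Nat.mod_lt _ hpp⟩)
        = x ^ (w.1 % p) * d ^ (w.2 % p) from rfl] at hsm
      rwa [hb1] at hsm
    rw [weyl_repr_sum B a, Finsupp.sum]
    refine Submodule.sum_mem _ fun w hw => ?_
    have hcent : algebraMap k A (B.repr a w) ∈ Subring.center A :=
      Subring.mem_center_iff.mpr fun g => (Algebra.commutes _ _).symm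
    have : B.repr a w • B w = (⟨algebraMap k A (B.repr a w), hcent⟩ : Subring.center A) • B w := by
      rw [weyl_smul_center, Algebra.smul_def]
    rw [this]
    exact Submodule.smul_mem _ _ (hmono w)
  -- linear independence
  have hli : LinearIndependent (Subring.center A) e := by
    rw [Fintype.linearIndependent_iff]
    intro g hg ab
    obtain ⟨a₀, b₀⟩ := ab
    have hsum : (∑ rs : Fin p × Fin p, ((g rs : A)) * (x ^ (rs.1 : ℕ) * d ^ (rs.2 : ℕ))) = 0 := by
      rw [← hg]
      exact Finset.sum_congr rfl fun rs _ => rfl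
    have hval : ((g (a₀, b₀) : A)) = 0 := by
      have hrep : B.repr ((g (a₀, b₀) : A)) = 0 := by
        ext w
        obtain ⟨u, v⟩ := w
        by_cases hdvd : p ∣ u ∧ p ∣ v
        · have h0 : B.repr (∑ rs : Fin p × Fin p,
              ((g rs : A)) * (x ^ (rs.1 : ℕ) * d ^ (rs.2 : ℕ))) ((u + (a₀:ℕ), v + (b₀:ℕ))) = 0 := by
            rw [hsum, map_zero]; rfl
          rw [map_sum, Finsupp.finset_sum_apply] at h0
          have hterm : ∀ rs : Fin p × Fin p,
              B.repr ((g rs : A) * (x ^ (rs.1:ℕ) * d ^ (rs.2:ℕ))) ((u + (a₀:ℕ), v + (b₀:ℕ)))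
                = if (rs.1 : ℕ) = (a₀ : ℕ) ∧ (rs.2 : ℕ) = (b₀ : ℕ)
                  then B.repr (g rs : A) (u, v) else 0 := fun rs =>
            weyl_central_mul_repr B hxd hB hdp (g rs).2 _ _ _ _ u v
              rs.1.isLt rs.2.isLt a₀.isLt b₀.isLt hdvd.1 hdvd.2
          rw [Finset.sum_congr rfl (fun rs _ => hterm rs)] at h0
          rw [Finset.sum_eq_single (a₀, b₀)] at h0
          · simpa using h0
          · intro rs _ hne
            rw [if_neg]
            rintro ⟨hc1, hc2⟩
            exact hne (Prod.ext (Fin.ext hc1) (Fin.ext hc2))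
          · intro hcon; exact absurd (Finset.mem_univ _) hcon
        · exact weyl_center_repr B hxd hB (g (a₀, b₀)).2 u v hdvd
      simpa using (LinearEquiv.map_eq_zero_iff B.repr).mp hrep
    exact Subtype.ext hval
  let hZbasis : Module.Basis (Fin p × Fin p) (Subring.center A) A := Module.Basis.mk hli hspan
  let E : (Fin p × Fin p) ≃ Fin (p ^ 2) := finProdFinEquiv.trans (finCongr (by rw [sq]))
  let hZb2 : Module.Basis (Fin (p ^ 2)) (Subring.center A) A := hZbasis.reindex E
  refine ⟨hdom, ⟨hZb2⟩, ?_⟩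
  haveI : IsDomain (Subring.center A) := inferInstance
  let bT := Algebra.TensorProduct.basis (FractionRing (Subring.center A)) hZb2
  rw [Module.finrank_eq_card_basis bT]
  simp
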